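/- arXiv:1807.09857 — 4 statements merged into one kernel-verified Lean document; each statement's English description precedes it below -/
import Mathlib

section
/- Let ψ(x) = x²/2 + a x + δψ(x) with δψ and δψ'' bounded, and let μ_m denote the exponentially tilted probability measure with density exp(−ψ*(ẑ_m) + ẑ_m z − ψ(z)), where ẑ_m is chosen so that μ_m has mean m. Then there exist constants 0 < c < C < ∞ such that for all m ∈ ℝ: c ≤ Var(μ_m) ≤ C and |∫ (z−m)³ μ_m(dz)| ≤ C, uniformly in m. -/
open MeasureTheory Real

noncomputable def g0fn : ℝ → ℝ := fun x => Real.exp (-x^2/2)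

lemma g0fn_pos (x : ℝ) : 0 < g0fn x := Real.exp_pos _

lemma g0_int0 : Integrable (fun x : ℝ => Real.exp (-x^2/2)) := by
  have := integrable_exp_neg_mul_sq (by norm_num : (0:ℝ) < 1/2)
  convert this using 2 with x; ring_nf

lemma g0_int : Integrable g0fn := g0_int0

lemma pow_g0_int0 (n : ℕ) : Integrable (fun x : ℝ => x ^ n * Real.exp (-x^2/2)) := by
  have h := integrable_rpow_mul_exp_neg_mul_sq (by norm_num : (0:ℝ) < 1/2)
    (s := n) (lt_of_lt_of_le (by norm_num) (Nat.cast_nonneg n))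
  have e : ∀ x : ℝ, x ^ (n : ℝ) * Real.exp (-(1/2) * x ^ 2) = x ^ n * Real.exp (-x^2/2) := by
    intro x; rw [Real.rpow_natCast]; ring_nf
  rw [show (fun x : ℝ => x ^ n * Real.exp (-x^2/2))
      = fun x : ℝ => x ^ (n:ℝ) * Real.exp (-(1/2) * x ^ 2) from funext fun x => (e x).symm]
  exact h

lemma pow_g0_int (n : ℕ) : Integrable (fun x : ℝ => x ^ n * g0fn x) := pow_g0_int0 n

lemma abspow_g0_int (n : ℕ) : Integrable (fun x : ℝ => |x| ^ n * g0fn x) := by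
  have h := (pow_g0_int n).abs
  have e : ∀ x : ℝ, |x ^ n * g0fn x| = |x| ^ n * g0fn x := by
    intro x; rw [abs_mul, abs_pow, abs_of_nonneg (g0fn_pos _).le]
  simpa [e] using h

lemma xg0_int : Integrable (fun x : ℝ => x * g0fn x) := by
  simpa using pow_g0_int 1

lemma odd_g0_int0 : ∫ x : ℝ, x * Real.exp (-x^2/2) = 0 := by
  have h := integral_neg_eq_self (fun x : ℝ => x * Real.exp (-x^2/2)) volume
  have e : ∀ x : ℝ, (-x) * Real.exp (-(-x)^2/2) = -(x * Real.exp (-x^2/2)) := by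
    intro x; ring_nf
  rw [show (fun x : ℝ => (-x) * Real.exp (-(-x)^2/2))
      = fun x => -(x * Real.exp (-x^2/2)) from funext e] at h
  rw [integral_neg] at h
  linarith

lemma odd_g0_int : ∫ x : ℝ, x * g0fn x = 0 := odd_g0_int0

lemma J0_pos0 : 0 < ∫ x : ℝ, Real.exp (-x^2/2) := by
  rw [integral_pos_iff_support_of_nonneg_ae
    (Filter.Eventually.of_forall (fun x => (Real.exp_pos _).le)) g0_int0]
  have : Function.support (fun x : ℝ => Real.exp (-x^2/2)) = Set.univ := by
    ext x; simp [Function.support, (Real.exp_pos _).ne']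
  simp [this]

lemma J0_pos : 0 < ∫ x : ℝ, g0fn x := J0_pos0

lemma J2_pos0 : 0 < ∫ x : ℝ, x^2 * Real.exp (-x^2/2) := by
  rw [integral_pos_iff_support_of_nonneg_ae
    (Filter.Eventually.of_forall (fun x => by positivity)) (by simpa using pow_g0_int0 2)]
  have h : Function.support (fun x : ℝ => x^2 * Real.exp (-x^2/2)) = {0}ᶜ := by
    ext x
    simp [Function.support, (Real.exp_pos _).ne', pow_eq_zero_iff, sub_eq_zero]
  rw [h, Set.compl_eq_univ_diff,
    measure_diff (Set.subset_univ _) (measurableSet_singleton _).nullMeasurableSet (by simp)]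
  simp [Real.volume_singleton]

lemma J2_pos : 0 < ∫ x : ℝ, x^2 * g0fn x := J2_pos0

lemma pow_add_le_aux (u v : ℝ) (hu : 0 ≤ u) (hv : 0 ≤ v) (n : ℕ) :
    (u + v) ^ n ≤ 2 ^ n * (u ^ n + v ^ n) := by
  have h1 : u + v ≤ 2 * max u v := by
    rcases le_total u v with h | h
    · rw [max_eq_right h]; linarith
    · rw [max_eq_left h]; linarith
  calc (u + v) ^ n ≤ (2 * max u v) ^ n :=
        pow_le_pow_left₀ (add_nonneg hu hv) h1 n
    _ = 2 ^ n * (max u v) ^ n := mul_pow _ _ _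
    _ ≤ 2 ^ n * (u ^ n + v ^ n) := by
        have : (max u v) ^ n ≤ u ^ n + v ^ n := by
          rcases le_total u v with h | h
          · rw [max_eq_right h]; nlinarith [pow_nonneg hu n]
          · rw [max_eq_left h]; nlinarith [pow_nonneg hv n]
        exact mul_le_mul_of_nonneg_left this (by positivity)

set_option maxHeartbeats 2000000 in
/-- Uniform bounds on the variance and absolute third centered moment of the
exponentially tilted measures `μ_m` (with density proportional to
`exp(ẑ z − ψ(z))`, the tilt `ẑ` chosen so that the mean is `m`), uniformly in
the mean `m`. -/
theorem stmt_5 (a : ℝ) (δψ : ℝ → ℝ) (Cb : ℝ)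
    (hδ : ContDiff ℝ 2 δψ)
    (hbd : ∀ x, |δψ x| ≤ Cb)
    (hbd2 : ∀ x, |deriv (deriv δψ) x| ≤ Cb)
    (ψ : ℝ → ℝ) (hψ : ∀ x, ψ x = x ^ 2 / 2 + a * x + δψ x) :
    ∃ c C : ℝ, 0 < c ∧ c < C ∧
      ∀ m zh : ℝ,
        (∫ z, z * Real.exp (zh * z - ψ z)) / (∫ z, Real.exp (zh * z - ψ z)) = m →
        (c ≤ (∫ z, (z - m) ^ 2 * Real.exp (zh * z - ψ z)) /
              (∫ z, Real.exp (zh * z - ψ z)) ∧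
         (∫ z, (z - m) ^ 2 * Real.exp (zh * z - ψ z)) /
              (∫ z, Real.exp (zh * z - ψ z)) ≤ C ∧
         |(∫ z, (z - m) ^ 3 * Real.exp (zh * z - ψ z)) /
              (∫ z, Real.exp (zh * z - ψ z))| ≤ C) := by
  obtain rfl : ψ = fun x => x ^ 2 / 2 + a * x + δψ x := funext hψ
  clear hψ
  have hCb : 0 ≤ Cb := (abs_nonneg _).trans (hbd 0)
  have hδc : Continuous δψ := hδ.continuous
  set J0 : ℝ := ∫ x : ℝ, g0fn x with hJ0def
  set J1 : ℝ := ∫ x : ℝ, |x| * g0fn x with hJ1def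
  set J2 : ℝ := ∫ x : ℝ, x^2 * g0fn x with hJ2def
  set J3 : ℝ := ∫ x : ℝ, |x|^3 * g0fn x with hJ3def
  have hJ0 : 0 < J0 := J0_pos
  have hJ2 : 0 < J2 := J2_pos
  have hJ1 : 0 ≤ J1 := integral_nonneg fun x => mul_nonneg (abs_nonneg _) (g0fn_pos x).le
  have hJ3 : 0 ≤ J3 := integral_nonneg fun x => mul_nonneg (pow_nonneg (abs_nonneg _) 3) (g0fn_pos x).le
  set B : ℝ := Real.exp (2*Cb) * (J1/J0) with hBdef
  set c0 : ℝ := Real.exp (-(2*Cb)) * (J2/J0) with hc0def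
  set C0 : ℝ := Real.exp (2*Cb) * (J2/J0 + B^2)
      + Real.exp (2*Cb) * (8*(J3/J0) + 8*B^3) + c0 + 1 with hC0def
  have hB : 0 ≤ B := mul_nonneg (Real.exp_pos _).le (div_nonneg hJ1 hJ0.le)
  have hc0 : 0 < c0 := mul_pos (Real.exp_pos _) (div_pos hJ2 hJ0)
  have hcC : c0 < C0 := by
    have h1 : 0 ≤ Real.exp (2*Cb) * (J2/J0 + B^2) :=
      mul_nonneg (Real.exp_pos _).le (add_nonneg (div_nonneg hJ2.le hJ0.le) (sq_nonneg _))
    have h2 : 0 ≤ Real.exp (2*Cb) * (8*(J3/J0) + 8*B^3) :=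
      mul_nonneg (Real.exp_pos _).le (add_nonneg
        (mul_nonneg (by norm_num) (div_nonneg hJ3 hJ0.le))
        (mul_nonneg (by norm_num) (pow_nonneg hB 3)))
    rw [hC0def]; linarith only [h1, h2]
  refine ⟨c0, C0, hc0, hcC, ?_⟩
  intro m zh hm
  set b : ℝ := zh - a with hbdef
  set c : ℝ := m - b with hcdef
  set A : ℝ := Real.exp (b^2/2) with hAdef
  have hA : 0 < A := Real.exp_pos _
  set Klo : ℝ := Real.exp (-Cb) * A with hKlodef
  set Khi : ℝ := Real.exp Cb * A with hKhidef
  have hKlo : 0 < Klo := mul_pos (Real.exp_pos _) hA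
  have hKhi : 0 < Khi := mul_pos (Real.exp_pos _) hA
  set F : ℝ → ℝ := fun z => Real.exp (zh * z - (z ^ 2 / 2 + a * z + δψ z)) with hFdef
  have hFpos : ∀ z, 0 < F z := fun z => Real.exp_pos _
  have hFe : ∀ z, F z = Real.exp (b^2/2 - δψ z) * g0fn (z - b) := by
    intro z
    rw [hFdef]
    simp only [g0fn]
    rw [← Real.exp_add]
    congr 1
    rw [hbdef]; ring
  have hg0nn : ∀ y : ℝ, 0 ≤ g0fn y := fun y => (Real.exp_pos _).le
  have hup : ∀ z, F z ≤ Khi * g0fn (z - b) := by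
    intro z
    rw [hFe z]
    refine mul_le_mul_of_nonneg_right ?_ (hg0nn _)
    rw [hKhidef, hAdef, ← Real.exp_add]
    apply Real.exp_le_exp.mpr
    have h := (abs_le.mp (hbd z)).1; linarith only [h]
  have hlow : ∀ z, Klo * g0fn (z - b) ≤ F z := by
    intro z
    rw [hFe z]
    refine mul_le_mul_of_nonneg_right ?_ (hg0nn _)
    rw [hKlodef, hAdef, ← Real.exp_add]
    apply Real.exp_le_exp.mpr
    have h := (abs_le.mp (hbd z)).2; linarith only [h]
  have hFc : Continuous F := by
    rw [hFdef]; fun_prop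
  have hg0c : Continuous g0fn := by unfold g0fn; fun_prop
  -- integrability of |z - t|^n * F z
  have habs : ∀ (n : ℕ) (t : ℝ), Integrable (fun z => |z - t| ^ n * F z) := by
    intro n t
    have hbase : Integrable (fun x : ℝ => |x| ^ n * g0fn x + |t - b| ^ n * g0fn x) :=
      (abspow_g0_int n).add (g0_int.const_mul _)
    have hcomp : Integrable (fun z : ℝ => |z - b| ^ n * g0fn (z - b) + |t - b| ^ n * g0fn (z - b)) :=
      hbase.comp_sub_right b
    have hdom : Integrable (fun z : ℝ =>
        (Khi * 2 ^ n) * (|z - b| ^ n * g0fn (z - b) + |t - b| ^ n * g0fn (z - b))) :=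
      hcomp.const_mul _
    refine hdom.mono' ?_ ?_
    · exact (((continuous_abs.comp (continuous_id.sub continuous_const)).pow n).mul
        hFc).aestronglyMeasurable
    · refine Filter.Eventually.of_forall fun z => ?_
      have h0 : 0 ≤ |z - t| ^ n * F z := by positivity
      rw [Real.norm_eq_abs, abs_of_nonneg h0]
      have h1 : |z - t| ≤ |z - b| + |t - b| := by
        have : z - t = (z - b) - (t - b) := by ring
        rw [this]; exact abs_sub _ _
      have h2 : |z - t| ^ n ≤ 2 ^ n * (|z - b| ^ n + |t - b| ^ n) :=
        (pow_le_pow_left₀ (abs_nonneg _) h1 n).trans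
          (pow_add_le_aux _ _ (abs_nonneg _) (abs_nonneg _) n)
      have h3 : F z ≤ Khi * g0fn (z - b) := hup z
      have hg0nn : 0 ≤ g0fn (z - b) := (Real.exp_pos _).le
      calc |z - t| ^ n * F z
          ≤ (2 ^ n * (|z - b| ^ n + |t - b| ^ n)) * (Khi * g0fn (z - b)) := by
            apply mul_le_mul h2 h3 (hFpos z).le
            positivity
        _ = (Khi * 2 ^ n) * (|z - b| ^ n * g0fn (z - b) + |t - b| ^ n * g0fn (z - b)) := by ring
  have hF_int : Integrable F := by
    have h := habs 0 0
    simpa only [pow_zero, one_mul] using h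
  have habs_mono : ∀ (n : ℕ) (t : ℝ), Integrable (fun z => (z - t) ^ n * F z) := by
    intro n t
    refine (habs n t).mono' ((((continuous_id.sub continuous_const).pow n).mul
      hFc).aestronglyMeasurable) ?_
    refine Filter.Eventually.of_forall fun z => ?_
    rw [Real.norm_eq_abs, abs_mul, abs_of_nonneg (hFpos z).le, abs_pow]
  have hzF : Integrable (fun z => z * F z) := by
    have h := habs_mono 1 0
    simpa only [pow_one, sub_zero] using h
  have h2F : Integrable (fun z => (z - m) ^ 2 * F z) := habs_mono 2 m
  have h3F : Integrable (fun z => (z - m) ^ 3 * F z) := habs_mono 3 m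
  -- shifted gaussian integrability & integrals
  have hg0shift : Integrable (fun z : ℝ => g0fn (z - b)) := g0_int.comp_sub_right b
  have hIg0shift : ∫ z : ℝ, g0fn (z - b) = J0 := integral_sub_right_eq_self g0fn b
  set Z : ℝ := ∫ z, F z with hZdef
  have hZlo : Klo * J0 ≤ Z := by
    have := integral_mono (hg0shift.const_mul Klo) hF_int hlow
    rwa [integral_const_mul, hIg0shift] at this
  have hZhi : Z ≤ Khi * J0 := by
    have := integral_mono hF_int (hg0shift.const_mul Khi) hup
    rwa [integral_const_mul, hIg0shift] at this
  have hZpos : 0 < Z := lt_of_lt_of_le (mul_pos hKlo hJ0) hZlo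
  -- second moment of shifted gaussian
  have hbase2 : Integrable (fun x : ℝ => (x - c) ^ 2 * g0fn x) := by
    have : (fun x : ℝ => (x - c) ^ 2 * g0fn x)
        = fun x : ℝ => x ^ 2 * g0fn x + (-2*c) * (x * g0fn x) + c ^ 2 * g0fn x :=
      funext fun x => by ring
    rw [this]
    exact ((pow_g0_int 2).add (xg0_int.const_mul _)).add (g0_int.const_mul _)
  have h2geq : (fun z : ℝ => (z - m) ^ 2 * g0fn (z - b))
      = fun z : ℝ => (fun x : ℝ => (x - c) ^ 2 * g0fn x) (z - b) :=
    funext fun z => by simp only; rw [hcdef]; ring_nf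
  have h2g : Integrable (fun z : ℝ => (z - m) ^ 2 * g0fn (z - b)) := by
    rw [h2geq]; exact hbase2.comp_sub_right b
  have hT2 : ∫ z : ℝ, (z - m) ^ 2 * g0fn (z - b) = J2 + c ^ 2 * J0 := by
    rw [h2geq, integral_sub_right_eq_self (fun x : ℝ => (x - c) ^ 2 * g0fn x) b]
    have e : (fun x : ℝ => (x - c) ^ 2 * g0fn x)
        = fun x : ℝ => x ^ 2 * g0fn x + ((-2*c) * (x * g0fn x) + c ^ 2 * g0fn x) :=
      funext fun x => by ring
    have i2a : Integrable (fun x : ℝ => (-2*c) * (x * g0fn x)) := xg0_int.const_mul _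
    have i2b : Integrable (fun x : ℝ => c ^ 2 * g0fn x) := g0_int.const_mul _
    have i1 : Integrable (fun x : ℝ => (-2*c) * (x * g0fn x) + c ^ 2 * g0fn x) := i2a.add i2b
    rw [e, integral_add (pow_g0_int 2) i1, integral_add i2a i2b,
      integral_const_mul, integral_const_mul]
    have hodd : ∫ x : ℝ, x * g0fn x = 0 := odd_g0_int
    rw [hodd, ← hJ2def, ← hJ0def]
    ring
  -- second moment bounds for F
  set M2 : ℝ := ∫ z, (z - m) ^ 2 * F z with hM2def
  have hM2lo : Klo * J2 ≤ M2 := by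
    have hmono := integral_mono (h2g.const_mul Klo) h2F (fun z => by
      calc Klo * ((z - m) ^ 2 * g0fn (z - b)) = (z - m) ^ 2 * (Klo * g0fn (z - b)) := by ring
        _ ≤ (z - m) ^ 2 * F z := mul_le_mul_of_nonneg_left (hlow z) (sq_nonneg _))
    rw [integral_const_mul, hT2] at hmono
    have hx : J2 ≤ J2 + c ^ 2 * J0 := le_add_of_nonneg_right (mul_nonneg (sq_nonneg c) hJ0.le)
    exact (mul_le_mul_of_nonneg_left hx hKlo.le).trans hmono
  have hM2hi : M2 ≤ Khi * (J2 + c ^ 2 * J0) := by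
    have hmono := integral_mono h2F (h2g.const_mul Khi) (fun z => by
      calc (z - m) ^ 2 * F z ≤ (z - m) ^ 2 * (Khi * g0fn (z - b)) :=
            mul_le_mul_of_nonneg_left (hup z) (sq_nonneg _)
        _ = Khi * ((z - m) ^ 2 * g0fn (z - b)) := by ring)
    rwa [integral_const_mul, hT2] at hmono
  -- bound on |c|
  have hb1base : Integrable (fun x : ℝ => |x| * g0fn x) := by
    have h := abspow_g0_int 1
    simpa only [pow_one] using h
  have hb1 : Integrable (fun z : ℝ => |z - b| * g0fn (z - b)) := hb1base.comp_sub_right b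
  have hIb1 : ∫ z : ℝ, |z - b| * g0fn (z - b) = J1 :=
    integral_sub_right_eq_self (fun x : ℝ => |x| * g0fn x) b
  have habsb : Integrable (fun z : ℝ => |z - b| * F z) := by
    have h := habs 1 b
    simpa only [pow_one] using h
  have hT1 : ∫ z : ℝ, |z - b| * F z ≤ Khi * J1 := by
    have hmono := integral_mono habsb (hb1.const_mul Khi) (fun z => by
      calc |z - b| * F z ≤ |z - b| * (Khi * g0fn (z - b)) :=
            mul_le_mul_of_nonneg_left (hup z) (abs_nonneg _)
        _ = Khi * (|z - b| * g0fn (z - b)) := by ring)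
    rwa [integral_const_mul, hIb1] at hmono
  have hM1 : ∫ z, z * F z = m * Z := by
    rw [div_eq_iff hZpos.ne'] at hm
    exact hm
  have hcb : ∫ z : ℝ, (z - b) * F z = c * Z := by
    have e : (fun z : ℝ => (z - b) * F z) = fun z : ℝ => z * F z + (-b) * F z :=
      funext fun z => by ring
    rw [e, integral_add hzF (hF_int.const_mul _), integral_const_mul, hM1, hZdef, hcdef]
    ring
  have hcabs : |c| * Z ≤ Khi * J1 := by
    have h1 : |∫ z : ℝ, (z - b) * F z| ≤ ∫ z : ℝ, |z - b| * F z := by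
      have habs0 := norm_integral_le_integral_norm (f := fun z : ℝ => (z - b) * F z) (μ := volume)
      rw [Real.norm_eq_abs] at habs0
      refine habs0.trans (le_of_eq ?_)
      congr 1
      funext z
      rw [Real.norm_eq_abs, abs_mul, abs_of_nonneg (hFpos z).le]
    rw [hcb, abs_mul, abs_of_pos hZpos] at h1
    exact h1.trans hT1
  have hratio : ∀ X Y : ℝ, 0 < Y → Khi * X / (Klo * Y) = Real.exp (2*Cb) * (X/Y) := by
    intro X Y hY
    rw [hKhidef, hKlodef, Real.exp_neg, two_mul, Real.exp_add]
    field_simp [hA.ne', (Real.exp_pos Cb).ne', hY.ne']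
  have hratio' : ∀ X Y : ℝ, 0 < Y → Klo * X / (Khi * Y) = Real.exp (-(2*Cb)) * (X/Y) := by
    intro X Y hY
    rw [hKhidef, hKlodef, Real.exp_neg, Real.exp_neg, two_mul, Real.exp_add]
    field_simp [hA.ne', (Real.exp_pos Cb).ne', hY.ne']
  have hc : |c| ≤ B := by
    have h1 : |c| ≤ Khi * J1 / Z := by
      rw [le_div_iff₀ hZpos]; exact hcabs
    have h2 : Khi * J1 / Z ≤ Khi * J1 / (Klo * J0) :=
      div_le_div_of_nonneg_left (mul_nonneg hKhi.le hJ1) (mul_pos hKlo hJ0) hZlo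
    have h3 : Khi * J1 / (Klo * J0) = B := by
      rw [hratio J1 J0 hJ0, hBdef]
    linarith only [h1, h2, h3]
  constructor
  · -- variance lower bound
    have hM2nn : 0 ≤ M2 := ((mul_pos hKlo hJ2).trans_le hM2lo).le
    have h1 : Klo * J2 / (Khi * J0) ≤ M2 / Z :=
      div_le_div₀ hM2nn hM2lo hZpos hZhi
    have h2 : Klo * J2 / (Khi * J0) = c0 := by
      rw [hratio' J2 J0 hJ0, hc0def]
    linarith only [h1, h2]
  constructor
  · -- variance upper bound
    have h1 : M2 / Z ≤ Khi * (J2 + c ^ 2 * J0) / (Klo * J0) :=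
      div_le_div₀ (mul_nonneg hKhi.le (add_nonneg hJ2.le
        (mul_nonneg (sq_nonneg _) hJ0.le))) hM2hi (mul_pos hKlo hJ0) hZlo
    have h2 : Khi * (J2 + c ^ 2 * J0) / (Klo * J0)
        = Real.exp (2*Cb) * ((J2 + c ^ 2 * J0)/J0) := hratio _ _ hJ0
    have h3 : (J2 + c ^ 2 * J0)/J0 = J2/J0 + c ^ 2 := by
      field_simp
    have h4 : c ^ 2 ≤ B ^ 2 := (sq_abs c) ▸ pow_le_pow_left₀ (abs_nonneg c) hc 2
    have h5 : Real.exp (2*Cb) * (J2/J0 + c ^ 2) ≤ Real.exp (2*Cb) * (J2/J0 + B ^ 2) :=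
      mul_le_mul_of_nonneg_left (add_le_add_right h4 _) (Real.exp_pos _).le
    have h6 : 0 ≤ Real.exp (2*Cb) * (8*(J3/J0) + 8*B^3) :=
      mul_nonneg (Real.exp_pos _).le (add_nonneg
        (mul_nonneg (by norm_num) (div_nonneg hJ3 hJ0.le))
        (mul_nonneg (by norm_num) (pow_nonneg hB 3)))
    have h2' : M2 / Z ≤ Real.exp (2*Cb) * (J2/J0 + c ^ 2) := by
      rw [← h3, ← h2]; exact h1
    rw [hC0def]
    linarith only [h2', h5, h6, hc0]
  · -- third moment bound
    set M3 : ℝ := ∫ z, (z - m) ^ 3 * F z with hM3def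
    have hbase3 : Integrable (fun x : ℝ => |x - c| ^ 3 * g0fn x) := by
      have hdom : Integrable (fun x : ℝ => 8 * (|x| ^ 3 * g0fn x + |c| ^ 3 * g0fn x)) :=
        ((abspow_g0_int 3).add (g0_int.const_mul _)).const_mul 8
      refine hdom.mono' (((continuous_abs.comp (continuous_id.sub continuous_const)).pow 3).mul
        hg0c).aestronglyMeasurable ?_
      refine Filter.Eventually.of_forall fun x => ?_
      have hg0nnx : 0 < g0fn x := g0fn_pos _
      rw [Real.norm_eq_abs, abs_of_nonneg (by positivity)]
      have h1 : |x - c| ≤ |x| + |c| := abs_sub _ _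
      have h2 : |x - c| ^ 3 ≤ 2 ^ 3 * (|x| ^ 3 + |c| ^ 3) :=
        (pow_le_pow_left₀ (abs_nonneg _) h1 3).trans
          (pow_add_le_aux _ _ (abs_nonneg _) (abs_nonneg _) 3)
      calc |x - c| ^ 3 * g0fn x ≤ (2 ^ 3 * (|x| ^ 3 + |c| ^ 3)) * g0fn x :=
            mul_le_mul_of_nonneg_right h2 hg0nnx.le
        _ = 8 * (|x| ^ 3 * g0fn x + |c| ^ 3 * g0fn x) := by ring
    have h3geq : (fun z : ℝ => |z - m| ^ 3 * g0fn (z - b))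
        = fun z : ℝ => (fun x : ℝ => |x - c| ^ 3 * g0fn x) (z - b) :=
      funext fun z => by
        simp only
        rw [hcdef]
        congr 2
        ring
    have h3g : Integrable (fun z : ℝ => |z - m| ^ 3 * g0fn (z - b)) := by
      rw [h3geq]; exact hbase3.comp_sub_right b
    have h3Fabs : Integrable (fun z : ℝ => |z - m| ^ 3 * F z) := habs 3 m
    have hT3 : ∫ z : ℝ, |z - m| ^ 3 * g0fn (z - b) ≤ 8 * J3 + 8 * |c| ^ 3 * J0 := by
      rw [h3geq, integral_sub_right_eq_self (fun x : ℝ => |x - c| ^ 3 * g0fn x) b]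
      have hdomI : Integrable (fun x : ℝ => 8 * (|x| ^ 3 * g0fn x) + (8 * |c| ^ 3) * g0fn x) :=
        ((abspow_g0_int 3).const_mul 8).add (g0_int.const_mul _)
      have hmono := integral_mono hbase3 hdomI (fun x => by
        have hg0nnx : 0 < g0fn x := g0fn_pos _
        have h1 : |x - c| ≤ |x| + |c| := abs_sub _ _
        have h2 : |x - c| ^ 3 ≤ 2 ^ 3 * (|x| ^ 3 + |c| ^ 3) :=
          (pow_le_pow_left₀ (abs_nonneg _) h1 3).trans
            (pow_add_le_aux _ _ (abs_nonneg _) (abs_nonneg _) 3)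
        calc |x - c| ^ 3 * g0fn x ≤ (2 ^ 3 * (|x| ^ 3 + |c| ^ 3)) * g0fn x :=
              mul_le_mul_of_nonneg_right h2 hg0nnx.le
          _ = 8 * (|x| ^ 3 * g0fn x) + 8 * |c| ^ 3 * g0fn x := by ring)
      rw [integral_add ((abspow_g0_int 3).const_mul 8) (g0_int.const_mul _),
        integral_const_mul, integral_const_mul] at hmono
      calc ∫ x : ℝ, |x - c| ^ 3 * g0fn x
          ≤ (8 * ∫ x : ℝ, |x| ^ 3 * g0fn x) + (8 * |c| ^ 3) * ∫ x : ℝ, g0fn x := hmono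
        _ = 8 * J3 + 8 * |c| ^ 3 * J0 := by rw [hJ3def, hJ0def]
    have hM3abs : |M3| ≤ Khi * (8 * J3 + 8 * |c| ^ 3 * J0) := by
      have h1 : |M3| ≤ ∫ z : ℝ, |z - m| ^ 3 * F z := by
        rw [hM3def]
        have habs0 := norm_integral_le_integral_norm (f := fun z : ℝ => (z - m) ^ 3 * F z) (μ := volume)
        rw [Real.norm_eq_abs] at habs0
        refine habs0.trans (le_of_eq ?_)
        congr 1
        funext z
        rw [Real.norm_eq_abs, abs_mul, abs_of_nonneg (hFpos z).le, abs_pow]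
      have h2 : ∫ z : ℝ, |z - m| ^ 3 * F z ≤ Khi * (8 * J3 + 8 * |c| ^ 3 * J0) := by
        have hmono := integral_mono h3Fabs (h3g.const_mul Khi) (fun z => by
          calc |z - m| ^ 3 * F z ≤ |z - m| ^ 3 * (Khi * g0fn (z - b)) :=
                mul_le_mul_of_nonneg_left (hup z) (pow_nonneg (abs_nonneg _) 3)
            _ = Khi * (|z - m| ^ 3 * g0fn (z - b)) := by ring)
        rw [integral_const_mul] at hmono
        refine hmono.trans ?_
        exact mul_le_mul_of_nonneg_left hT3 hKhi.le
      linarith only [h1, h2]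
    have hdivbd : |M3 / Z| ≤ Real.exp (2*Cb) * (8*(J3/J0) + 8*B^3) := by
      rw [abs_div, abs_of_pos hZpos]
      have h1 : |M3| / Z ≤ Khi * (8 * J3 + 8 * |c| ^ 3 * J0) / (Klo * J0) :=
        div_le_div₀ (mul_nonneg hKhi.le (add_nonneg (by linarith only [hJ3])
          (mul_nonneg (mul_nonneg (by norm_num) (pow_nonneg (abs_nonneg _) 3)) hJ0.le)))
          hM3abs (mul_pos hKlo hJ0) hZlo
      have h2 : Khi * (8 * J3 + 8 * |c| ^ 3 * J0) / (Klo * J0)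
          = Real.exp (2*Cb) * ((8 * J3 + 8 * |c| ^ 3 * J0)/J0) := hratio _ _ hJ0
      have h3 : (8 * J3 + 8 * |c| ^ 3 * J0)/J0 = 8 * (J3/J0) + 8 * |c| ^ 3 := by
        field_simp
      have h4 : |c| ^ 3 ≤ B ^ 3 := pow_le_pow_left₀ (abs_nonneg _) hc 3
      have h5 : Real.exp (2*Cb) * (8*(J3/J0) + 8*|c|^3)
          ≤ Real.exp (2*Cb) * (8*(J3/J0) + 8*B^3) :=
        mul_le_mul_of_nonneg_left (add_le_add_right
          (mul_le_mul_of_nonneg_left h4 (by norm_num)) _) (Real.exp_pos _).le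
      calc |M3| / Z ≤ Real.exp (2*Cb) * ((8 * J3 + 8 * |c| ^ 3 * J0)/J0) := h2 ▸ h1
        _ = Real.exp (2*Cb) * (8*(J3/J0) + 8*|c|^3) := by rw [h3]
        _ ≤ _ := h5
    rw [hC0def]
    have h6 : 0 ≤ Real.exp (2*Cb) * (J2/J0 + B^2) :=
      mul_nonneg (Real.exp_pos _).le (add_nonneg (div_nonneg hJ2.le hJ0.le) (sq_nonneg _))
    linarith only [hdivbd, h6, hc0]
end

section
/- Let Y be the space of polynomials of degree ≤ L on [0,1] with the L² inner product, let Q : ℝ^J → Y be the L²-orthogonal projection of step functions (piecewise constant on the J subintervals of length 1/J) onto Y, and let JQᵗ : Y → ℝ^J be the operator (JQᵗ y)_j = J ∫_{(j−1)/J}^{j/J} y dθ. Then ‖Q∘(JQᵗ) − id_Y‖ ≤ C(L)/J² for a constant C(L) depending only on L. -/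
open MeasureTheory Real Polynomial

lemma polySq_integral_pos {p : Polynomial ℝ} (hp : p ≠ 0) :
    0 < ∫ x in Set.Icc (0:ℝ) 1, p.eval x * p.eval x := by
  have hnn : 0 ≤ᵐ[volume.restrict (Set.Icc (0:ℝ) 1)] fun x => p.eval x * p.eval x :=
    Filter.Eventually.of_forall fun x => mul_self_nonneg _
  have hint : IntegrableOn (fun x => p.eval x * p.eval x) (Set.Icc (0:ℝ) 1) volume :=
    (p.continuous.mul p.continuous).integrableOn_Icc
  rw [setIntegral_pos_iff_support_of_nonneg_ae hnn hint]
  have hsub : Set.Icc (0:ℝ) 1 \ {x | p.IsRoot x} ⊆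
      (Function.support fun x => p.eval x * p.eval x) ∩ Set.Icc (0:ℝ) 1 := by
    intro x hx
    refine ⟨?_, hx.1⟩
    have : p.eval x ≠ 0 := hx.2
    simp [Function.mem_support, mul_self_eq_zero, this]
  have hroots : volume {x : ℝ | p.IsRoot x} = 0 :=
    (p.finite_setOf_isRoot hp).measure_zero volume
  have hvol : volume (Set.Icc (0:ℝ) 1 \ {x | p.IsRoot x}) = 1 := by
    rw [measure_diff_null hroots, Real.volume_Icc]
    norm_num
  calc (0:ENNReal) < 1 := by norm_num
    _ = volume (Set.Icc (0:ℝ) 1 \ {x | p.IsRoot x}) := hvol.symm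
    _ ≤ _ := measure_mono hsub


lemma coeff_bound (L : ℕ) :
    ∃ C : ℝ, 0 < C ∧ ∀ p : Polynomial ℝ, p.natDegree ≤ L → ∀ i : ℕ,
      |p.coeff i| ≤ C * Real.sqrt (∫ x in Set.Icc (0:ℝ) 1, p.eval x ^ 2) := by
  classical
  set V := Polynomial.degreeLT ℝ (L+1) with hV
  letI core : InnerProductSpace.Core ℝ V :=
    { inner := fun p q =>
        ∫ x in Set.Icc (0:ℝ) 1, (p : Polynomial ℝ).eval x * (q : Polynomial ℝ).eval x
      conj_inner_symm := fun p q => by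
        simp only [starRingEnd_apply, star_trivial]
        simp [mul_comm]
      re_inner_nonneg := fun p => by
        simp only [RCLike.re_to_real]
        exact setIntegral_nonneg measurableSet_Icc fun x _ => mul_self_nonneg _
      add_left := fun p q r => by
        simp only [Submodule.coe_add, Polynomial.eval_add, add_mul]
        exact integral_add
          (((p : Polynomial ℝ).continuous.mul (r : Polynomial ℝ).continuous).integrableOn_Icc)
          (((q : Polynomial ℝ).continuous.mul (r : Polynomial ℝ).continuous).integrableOn_Icc)
      smul_left := fun p q r => by
        simp only [SetLike.val_smul, Polynomial.eval_smul, smul_eq_mul, mul_assoc,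
          starRingEnd_apply, star_trivial]
        exact integral_const_mul r _
      definite := fun p hp => by
        by_contra hne
        have hpne : (p : Polynomial ℝ) ≠ 0 := by
          intro h0
          exact hne (Subtype.ext h0)
        exact absurd hp (ne_of_gt (polySq_integral_pos hpne)) }
  letI : NormedAddCommGroup V := core.toNormedAddCommGroup
  letI : InnerProductSpace ℝ V := InnerProductSpace.ofCore core.toCore
  haveI : FiniteDimensional ℝ V :=
    LinearEquiv.finiteDimensional (Polynomial.degreeLTEquiv ℝ (L+1)).symm
  set ψ : ℕ → (V →L[ℝ] ℝ) := fun i =>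
    LinearMap.toContinuousLinearMap ((Polynomial.lcoeff ℝ i).comp V.subtype) with hψ
  refine ⟨(∑ i ∈ Finset.range (L+1), ‖ψ i‖) + 1, by positivity, ?_⟩
  intro p hp i
  have hmem : p ∈ V := by
    rw [hV, Polynomial.mem_degreeLT]
    calc p.degree ≤ (p.natDegree : WithBot ℕ) := Polynomial.degree_le_natDegree
      _ < ((L+1 : ℕ) : WithBot ℕ) := by
          exact_mod_cast Nat.lt_succ_of_le hp
  set pV : V := ⟨p, hmem⟩ with hpV
  have hnorm : ‖pV‖ = Real.sqrt (∫ x in Set.Icc (0:ℝ) 1, p.eval x ^ 2) := by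
    rw [norm_eq_sqrt_real_inner]
    have : (inner ℝ pV pV : ℝ) = ∫ x in Set.Icc (0:ℝ) 1, p.eval x * p.eval x := rfl
    rw [this]
    congr 1
    simp [sq]
  by_cases hi : i < L + 1
  · have h1 : ‖(ψ i) pV‖ ≤ ‖ψ i‖ * ‖pV‖ := (ψ i).le_opNorm pV
    have h2 : (ψ i) pV = p.coeff i := rfl
    rw [h2, Real.norm_eq_abs] at h1
    have h3 : ‖ψ i‖ ≤ (∑ k ∈ Finset.range (L+1), ‖ψ k‖) + 1 := by
      have := Finset.single_le_sum (f := fun k => ‖ψ k‖)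
        (fun k _ => by positivity) (Finset.mem_range.2 hi)
      linarith
    calc |p.coeff i| ≤ ‖ψ i‖ * ‖pV‖ := h1
      _ ≤ ((∑ k ∈ Finset.range (L+1), ‖ψ k‖) + 1) * ‖pV‖ :=
          mul_le_mul_of_nonneg_right h3 (norm_nonneg _)
      _ = _ := by rw [hnorm]
  · have : p.coeff i = 0 :=
      Polynomial.coeff_eq_zero_of_natDegree_lt (lt_of_le_of_lt hp (by omega))
    rw [this, abs_zero]
    positivity


lemma pow_abs_diff {t u : ℝ} (ht : t ∈ Set.Icc (0:ℝ) 1) (hu : u ∈ Set.Icc (0:ℝ) 1) :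
    ∀ i : ℕ, |t ^ i - u ^ i| ≤ i * |t - u| := by
  obtain ⟨ht0, ht1⟩ := ht
  obtain ⟨hu0, hu1⟩ := hu
  intro i
  induction i with
  | zero => simp
  | succ n ih =>
    have key : t ^ (n+1) - u ^ (n+1) = t ^ n * (t - u) + u * (t ^ n - u ^ n) := by ring
    have h1 : |t ^ n * (t - u)| ≤ |t - u| := by
      rw [abs_mul]
      have : |t ^ n| ≤ 1 := by
        rw [abs_pow, abs_of_nonneg ht0]
        exact pow_le_one₀ ht0 ht1
      nlinarith [abs_nonneg (t - u)]
    have h2 : |u * (t ^ n - u ^ n)| ≤ n * |t - u| := by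
      rw [abs_mul, abs_of_nonneg hu0]
      calc u * |t ^ n - u ^ n| ≤ 1 * (n * |t - u|) := by
            apply mul_le_mul hu1 ih (abs_nonneg _) zero_le_one
        _ = n * |t - u| := one_mul _
    calc |t ^ (n+1) - u ^ (n+1)| ≤ |t ^ n * (t - u)| + |u * (t ^ n - u ^ n)| := by
          rw [key]; exact abs_add_le _ _
      _ ≤ |t - u| + n * |t - u| := add_le_add h1 h2
      _ = (n + 1 : ℕ) * |t - u| := by push_cast; ring

lemma eval_lip (L : ℕ) :
    ∃ C : ℝ, 0 < C ∧ ∀ p : Polynomial ℝ, p.natDegree ≤ L →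
      ∀ t ∈ Set.Icc (0:ℝ) 1, ∀ u ∈ Set.Icc (0:ℝ) 1,
      |p.eval t - p.eval u| ≤
        C * |t - u| * Real.sqrt (∫ x in Set.Icc (0:ℝ) 1, p.eval x ^ 2) := by
  obtain ⟨C₀, hC₀, hcb⟩ := coeff_bound L
  refine ⟨(L+1) * ((L+1) * C₀), by positivity, ?_⟩
  intro p hp t ht u hu
  set S : ℝ := Real.sqrt (∫ x in Set.Icc (0:ℝ) 1, p.eval x ^ 2) with hS
  have hS0 : 0 ≤ S := Real.sqrt_nonneg _
  have hev : ∀ v : ℝ, p.eval v = ∑ i ∈ Finset.range (L+1), p.coeff i * v ^ i := fun v =>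
    Polynomial.eval_eq_sum_range' (Nat.lt_succ_of_le hp) v
  rw [hev t, hev u, ← Finset.sum_sub_distrib]
  calc |∑ i ∈ Finset.range (L+1), (p.coeff i * t ^ i - p.coeff i * u ^ i)|
      ≤ ∑ i ∈ Finset.range (L+1), |p.coeff i * t ^ i - p.coeff i * u ^ i| :=
        Finset.abs_sum_le_sum_abs _ _
    _ ≤ ∑ _i ∈ Finset.range (L+1), (C₀ * S) * ((L+1) * |t - u|) := by
        apply Finset.sum_le_sum
        intro i hi
        have : p.coeff i * t ^ i - p.coeff i * u ^ i = p.coeff i * (t ^ i - u ^ i) := by ring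
        rw [this, abs_mul]
        have h1 : |p.coeff i| ≤ C₀ * S := hcb p hp i
        have h2 : |t ^ i - u ^ i| ≤ (L+1) * |t - u| := by
          refine (pow_abs_diff ht hu i).trans ?_
          have : (i : ℝ) ≤ (L+1 : ℝ) := by
            have := Finset.mem_range.1 hi
            exact_mod_cast this.le
          nlinarith [abs_nonneg (t - u)]
        exact mul_le_mul h1 h2 (abs_nonneg _) (by positivity)
    _ = (L+1) * ((L+1) * C₀) * |t - u| * S := by
        rw [Finset.sum_const, Finset.card_range]
        push_cast
        ring


/-- `Q∘(JQᵗ)` is close to the identity: if `y` is a polynomial of degree ≤ L,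
`ȳ_j = J∫_{(j−1)/J}^{j/J} y` its averages, `s` the corresponding step function and
`z` the `L²(0,1)`-orthogonal projection of `s` onto polynomials of degree ≤ L
(characterized by the orthogonality relations), then `‖z − y‖_{L²} ≤ (C(L)/J²)‖y‖_{L²}`,
with a constant depending only on `L`. -/
theorem stmt_9 (L : ℕ) :
    ∃ C : ℝ, 0 < C ∧ ∀ J : ℕ, 0 < J →
      ∀ y z : Polynomial ℝ, y.natDegree ≤ L → z.natDegree ≤ L →
      ∀ ybar : Fin J → ℝ,
        (∀ j : Fin J,
          ybar j = J * ∫ t in Set.Icc ((j : ℝ) / J) (((j : ℝ) + 1) / J), y.eval t) →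
      ∀ s : ℝ → ℝ,
        (∀ j : Fin J, ∀ t ∈ Set.Ico ((j : ℝ) / J) (((j : ℝ) + 1) / J), s t = ybar j) →
        (∀ q : Polynomial ℝ, q.natDegree ≤ L →
          (∫ t in Set.Icc (0:ℝ) 1, (s t - z.eval t) * q.eval t) = 0) →
        (∫ t in Set.Icc (0:ℝ) 1, (z.eval t - y.eval t) ^ 2) ≤
          (C / (J : ℝ) ^ 2) ^ 2 * ∫ t in Set.Icc (0:ℝ) 1, (y.eval t) ^ 2 := by
  obtain ⟨K, hK, hlip⟩ := eval_lip L
  refine ⟨K ^ 2, by positivity, ?_⟩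
  intro J hJ y z hy hz ybar hybar s hs horth
  have hJR : (0:ℝ) < J := by exact_mod_cast hJ
  have hJne : (J:ℝ) ≠ 0 := ne_of_gt hJR
  set q : Polynomial ℝ := z - y with hqdef
  have hqd : q.natDegree ≤ L := le_trans (Polynomial.natDegree_sub_le z y) (max_le hz hy)
  set I : Fin J → Set ℝ := fun j => Set.Ico ((j:ℝ)/J) (((j:ℝ)+1)/J) with hIdef
  have hβ1 : ∀ j : Fin J, ((j:ℝ)+1)/J ≤ 1 := by
    intro j
    rw [div_le_one hJR]
    exact_mod_cast Nat.succ_le_of_lt j.isLt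
  have hIsub : ∀ j, I j ⊆ Set.Icc (0:ℝ) 1 := by
    intro j t ht
    obtain ⟨h1, h2⟩ := ht
    exact ⟨le_trans (by positivity) h1, le_trans h2.le (hβ1 j)⟩
  have hlen : ∀ j : Fin J, ((j:ℝ)+1)/J - (j:ℝ)/J = 1/J := by
    intro j; rw [div_sub_div_same]; norm_num
  have hvol : ∀ j, volume (I j) = ENNReal.ofReal (1/J) := by
    intro j
    rw [hIdef]
    rw [Real.volume_Ico, hlen j]
  have hvolR : ∀ j, (volume (I j)).toReal = 1/J := by
    intro j; rw [hvol j, ENNReal.toReal_ofReal (by positivity)]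
  have hvollt : ∀ j, volume (I j) < ⊤ := by
    intro j; rw [hvol j]; exact ENNReal.ofReal_lt_top
  have hIccIco : ∀ (f : ℝ → ℝ) (j : Fin J),
      (∫ x in Set.Icc ((j:ℝ)/J) (((j:ℝ)+1)/J), f x) = ∫ x in I j, f x := by
    intro f j
    exact (setIntegral_congr_set Ico_ae_eq_Icc).symm
  have hcontOn : ∀ {g : ℝ → ℝ}, Continuous g → ∀ j, IntegrableOn g (I j) volume := by
    intro g hg j
    exact hg.integrableOn_Icc.mono_set Set.Ico_subset_Icc_self
  have hunion : (⋃ j : Fin J, I j) = Set.Ico (0:ℝ) 1 := by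
    ext t
    simp only [Set.mem_iUnion, hIdef, Set.mem_Ico]
    constructor
    · rintro ⟨j, h1, h2⟩
      exact ⟨le_trans (by positivity) h1, lt_of_lt_of_le h2 (hβ1 j)⟩
    · rintro ⟨ht0, ht1⟩
      have hnn : (0:ℝ) ≤ t * J := by positivity
      have hlt : t * (J:ℝ) < J := by nlinarith
      have hflt : ⌊t * (J:ℝ)⌋₊ < J := (Nat.floor_lt hnn).2 (by exact_mod_cast hlt)
      refine ⟨⟨⌊t * (J:ℝ)⌋₊, hflt⟩, ?_, ?_⟩
      · show ((⌊t * (J:ℝ)⌋₊ : ℝ))/J ≤ t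
        rw [div_le_iff₀ hJR]
        exact Nat.floor_le hnn
      · show t < ((⌊t * (J:ℝ)⌋₊ : ℝ) + 1)/J
        rw [lt_div_iff₀ hJR]
        exact Nat.lt_floor_add_one (t * J)
  have hdisj : Set.Pairwise (↑(Finset.univ : Finset (Fin J))) (Function.onFun Disjoint I) := by
    intro i _ j _ hij
    have hne : (i : ℕ) ≠ (j : ℕ) := fun h => hij (Fin.ext h)
    rw [Function.onFun, hIdef]
    rw [Set.Ico_disjoint_Ico]
    rcases lt_or_gt_of_ne hne with h | h
    · calc min (((i:ℝ)+1)/J) (((j:ℝ)+1)/J) ≤ ((i:ℝ)+1)/J := min_le_left _ _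
        _ ≤ (j:ℝ)/J := by
            gcongr
            exact_mod_cast Nat.succ_le_of_lt h
        _ ≤ max ((i:ℝ)/J) ((j:ℝ)/J) := le_max_right _ _
    · calc min (((i:ℝ)+1)/J) (((j:ℝ)+1)/J) ≤ ((j:ℝ)+1)/J := min_le_right _ _
        _ ≤ (i:ℝ)/J := by
            gcongr
            exact_mod_cast Nat.succ_le_of_lt h
        _ ≤ max ((i:ℝ)/J) ((j:ℝ)/J) := le_max_left _ _
  have hsplit : ∀ F : ℝ → ℝ, (∀ j, IntegrableOn F (I j) volume) →
      (∫ t in Set.Icc (0:ℝ) 1, F t) = ∑ j : Fin J, ∫ t in I j, F t := by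
    intro F hF
    have h1 : (∫ t in Set.Icc (0:ℝ) 1, F t) = ∫ t in Set.Ico (0:ℝ) 1, F t :=
      (setIntegral_congr_set Ico_ae_eq_Icc).symm
    have h2 : Set.Ico (0:ℝ) 1 = ⋃ j ∈ (Finset.univ : Finset (Fin J)), I j := by
      rw [← hunion]; simp
    rw [h1, h2, integral_biUnion_finset Finset.univ (fun j _ => measurableSet_Ico) hdisj
      (fun j _ => hF j)]
  -- step functions agree with averages on each interval
  have hstep : ∀ j : Fin J, ∀ t ∈ I j, (s t - z.eval t) * q.eval t
      = (ybar j - z.eval t) * q.eval t := fun j t ht => by rw [hs j t ht]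
  have hcont1 : ∀ j : Fin J, Continuous fun t => (ybar j - z.eval t) * q.eval t :=
    fun j => (continuous_const.sub z.continuous).mul q.continuous
  have hF1int : ∀ j, IntegrableOn (fun t => (s t - z.eval t) * q.eval t) (I j) volume :=
    fun j => (hcontOn (hcont1 j) j).congr_fun (fun t ht => (hstep j t ht).symm) measurableSet_Ico
  have hA2 : ∑ j : Fin J, (∫ t in I j, (ybar j - z.eval t) * q.eval t) = 0 := by
    have h0 := horth q hqd
    rw [hsplit _ hF1int] at h0
    calc ∑ j : Fin J, (∫ t in I j, (ybar j - z.eval t) * q.eval t)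
        = ∑ j : Fin J, ∫ t in I j, (s t - z.eval t) * q.eval t :=
          Finset.sum_congr rfl fun j _ =>
            (setIntegral_congr_fun measurableSet_Ico (hstep j)).symm
      _ = 0 := h0
  set Ny : ℝ := ∫ t in Set.Icc (0:ℝ) 1, (y.eval t) ^ 2 with hNy
  set Nq : ℝ := ∫ t in Set.Icc (0:ℝ) 1, (q.eval t) ^ 2 with hNqdef
  have hNy0 : 0 ≤ Ny := by
    rw [hNy]; exact setIntegral_nonneg measurableSet_Icc fun t _ => sq_nonneg _
  have hNq0 : 0 ≤ Nq := by
    rw [hNqdef]; exact setIntegral_nonneg measurableSet_Icc fun t _ => sq_nonneg _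
  have hqz : ∀ t : ℝ, q.eval t = z.eval t - y.eval t := fun t => by
    rw [hqdef, Polynomial.eval_sub]
  have hgoalLHS : (∫ t in Set.Icc (0:ℝ) 1, (z.eval t - y.eval t) ^ 2) = Nq := by
    rw [hNqdef]
    apply setIntegral_congr_fun measurableSet_Icc
    intro t _
    show (z.eval t - y.eval t) ^ 2 = q.eval t ^ 2
    rw [hqz t]
  set Qb : Fin J → ℝ := fun j => J * ∫ x in I j, q.eval x with hQb
  have hybar' : ∀ j, ybar j = J * ∫ x in I j, y.eval x := fun j => by
    rw [hybar j, hIccIco]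
  have hA4 : Nq = ∑ j : Fin J, ∫ t in I j, (z.eval t - y.eval t) * q.eval t := by
    have h1 : Nq = ∫ t in Set.Icc (0:ℝ) 1, (z.eval t - y.eval t) * q.eval t := by
      rw [hNqdef]
      apply setIntegral_congr_fun measurableSet_Icc
      intro t _
      show q.eval t ^ 2 = (z.eval t - y.eval t) * q.eval t
      rw [hqz t]; ring
    rw [h1]
    exact hsplit _ fun j => hcontOn ((z.continuous.sub y.continuous).mul q.continuous) j
  have hNq_eq : Nq = ∑ j : Fin J, ∫ t in I j, (ybar j - y.eval t) * q.eval t := by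
    have hper : ∑ j : Fin J, (∫ t in I j, (ybar j - y.eval t) * q.eval t)
        = ∑ j : Fin J, ((∫ t in I j, (z.eval t - y.eval t) * q.eval t)
            + ∫ t in I j, (ybar j - z.eval t) * q.eval t) := by
      refine Finset.sum_congr rfl fun j _ => ?_
      rw [← integral_add (f := fun t => (z.eval t - y.eval t) * q.eval t) (hcontOn ((z.continuous.sub y.continuous).mul q.continuous) j)
        (hcontOn (hcont1 j) j)]
      exact setIntegral_congr_fun measurableSet_Ico fun t _ => by ring
    rw [hper, Finset.sum_add_distrib, hA2, add_zero]
    exact hA4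
  have hzero : ∀ j : Fin J, (∫ t in I j, (ybar j - y.eval t)) = 0 := by
    intro j
    rw [integral_sub (integrableOn_const (C := ybar j) (hvollt j).ne) (hcontOn y.continuous j),
      setIntegral_const, measureReal_def, hvolR j, smul_eq_mul]
    have h1 : (∫ x in I j, y.eval x) = ybar j / J := by
      rw [hybar' j]; field_simp
    rw [h1]
    field_simp
    ring
  have hBj : ∀ j : Fin J, (∫ t in I j, (ybar j - y.eval t) * q.eval t)
      = ∫ t in I j, (ybar j - y.eval t) * (q.eval t - Qb j) := by
    intro j
    have h1 : (∫ t in I j, (ybar j - y.eval t) * (q.eval t - Qb j))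
        = (∫ t in I j, (ybar j - y.eval t) * q.eval t)
          - ∫ t in I j, Qb j * (ybar j - y.eval t) := by
      rw [← integral_sub (f := fun t => (ybar j - y.eval t) * q.eval t)
        (g := fun t => Qb j * (ybar j - y.eval t)) (hcontOn ((continuous_const.sub y.continuous).mul q.continuous) j)
        (hcontOn (continuous_const.mul (continuous_const.sub y.continuous)) j)]
      exact setIntegral_congr_fun measurableSet_Ico fun t _ => by ring
    rw [h1, integral_const_mul, hzero j, mul_zero, sub_zero]
  -- the deviation-from-average bound
  have hdev : ∀ p : Polynomial ℝ, p.natDegree ≤ L → ∀ j : Fin J, ∀ t ∈ I j,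
      |p.eval t - J * ∫ x in I j, p.eval x| ≤
        (K / J) * Real.sqrt (∫ x in Set.Icc (0:ℝ) 1, p.eval x ^ 2) := by
    intro p hp j t ht
    have hSp0 : 0 ≤ Real.sqrt (∫ x in Set.Icc (0:ℝ) 1, p.eval x ^ 2) := Real.sqrt_nonneg _
    have h1 : (J:ℝ) * ∫ x in I j, (p.eval t - p.eval x)
        = p.eval t - J * ∫ x in I j, p.eval x := by
      rw [integral_sub (integrableOn_const (C := p.eval t) (hvollt j).ne) (hcontOn p.continuous j),
        setIntegral_const, measureReal_def, hvolR j, smul_eq_mul, mul_sub, ← mul_assoc,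
        mul_one_div_cancel hJne, one_mul]
    rw [← h1, abs_mul, abs_of_pos hJR]
    have hbound : ∀ x ∈ I j, ‖p.eval t - p.eval x‖ ≤
        K * (1/J) * Real.sqrt (∫ x in Set.Icc (0:ℝ) 1, p.eval x ^ 2) := by
      intro x hx
      rw [Real.norm_eq_abs]
      have htx : |t - x| ≤ 1/J := by
        obtain ⟨h3, h4⟩ := ht
        obtain ⟨h5, h6⟩ := hx
        have hl := hlen j
        rw [abs_le]
        constructor <;> linarith
      calc |p.eval t - p.eval x|
          ≤ K * |t - x| * Real.sqrt (∫ x in Set.Icc (0:ℝ) 1, p.eval x ^ 2) :=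
            hlip p hp t (hIsub j ht) x (hIsub j hx)
        _ ≤ K * (1/J) * Real.sqrt (∫ x in Set.Icc (0:ℝ) 1, p.eval x ^ 2) := by
            apply mul_le_mul_of_nonneg_right _ hSp0
            exact mul_le_mul_of_nonneg_left htx (le_of_lt hK)
    have h3 := norm_setIntegral_le_of_norm_le_const (hvollt j) hbound
    rw [Real.norm_eq_abs, measureReal_def, hvolR j] at h3
    calc (J:ℝ) * |∫ x in I j, (p.eval t - p.eval x)|
        ≤ J * (K * (1/J) * Real.sqrt (∫ x in Set.Icc (0:ℝ) 1, p.eval x ^ 2) * (1/J)) :=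
          mul_le_mul_of_nonneg_left h3 (le_of_lt hJR)
      _ = (K / J) * Real.sqrt (∫ x in Set.Icc (0:ℝ) 1, p.eval x ^ 2) := by
          field_simp
  set Sy : ℝ := Real.sqrt Ny with hSy
  set Sq : ℝ := Real.sqrt Nq with hSqd
  have hSy0 : 0 ≤ Sy := Real.sqrt_nonneg _
  have hSq0 : 0 ≤ Sq := Real.sqrt_nonneg _
  have hdevy : ∀ j : Fin J, ∀ t ∈ I j, |y.eval t - ybar j| ≤ (K / J) * Sy := by
    intro j t ht
    have h := hdev y hy j t ht
    rw [← hybar' j] at h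
    rw [hSy, hNy]
    exact h
  have hdevq : ∀ j : Fin J, ∀ t ∈ I j, |q.eval t - Qb j| ≤ (K / J) * Sq := by
    intro j t ht
    have h := hdev q hqd j t ht
    have hQbj : Qb j = J * ∫ x in I j, q.eval x := by rw [hQb]
    rw [← hQbj] at h
    rw [hSqd, hNqdef]
    exact h
  have hEj : ∀ j : Fin J, |∫ t in I j, (ybar j - y.eval t) * (q.eval t - Qb j)|
      ≤ ((K/J * Sy) * (K/J * Sq)) * (1/J) := by
    intro j
    have hbound : ∀ t ∈ I j, ‖(ybar j - y.eval t) * (q.eval t - Qb j)‖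
        ≤ (K/J * Sy) * (K/J * Sq) := by
      intro t ht
      rw [Real.norm_eq_abs, abs_mul]
      have h1 : |ybar j - y.eval t| ≤ K/J * Sy := by
        rw [abs_sub_comm]
        exact hdevy j t ht
      have h2 : |q.eval t - Qb j| ≤ K/J * Sq := hdevq j t ht
      have hKJ : 0 ≤ K/J * Sq := by positivity
      exact mul_le_mul h1 h2 (abs_nonneg _) (by positivity)
    have h3 := norm_setIntegral_le_of_norm_le_const (hvollt j) hbound
    rw [Real.norm_eq_abs, measureReal_def, hvolR j] at h3
    exact h3
  have hsum : Nq ≤ K ^ 2 / (J:ℝ) ^ 2 * (Sy * Sq) := by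
    calc Nq = ∑ j : Fin J, ∫ t in I j, (ybar j - y.eval t) * (q.eval t - Qb j) := by
          rw [hNq_eq]; exact Finset.sum_congr rfl fun j _ => hBj j
      _ ≤ ∑ j : Fin J, |∫ t in I j, (ybar j - y.eval t) * (q.eval t - Qb j)| :=
          Finset.sum_le_sum fun j _ => le_abs_self _
      _ ≤ ∑ _j : Fin J, ((K/J * Sy) * (K/J * Sq)) * (1/J) :=
          Finset.sum_le_sum fun j _ => hEj j
      _ = (J:ℝ) * (((K/J * Sy) * (K/J * Sq)) * (1/J)) := by
          rw [Finset.sum_const, Finset.card_univ, Fintype.card_fin, nsmul_eq_mul]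
      _ = K ^ 2 / (J:ℝ) ^ 2 * (Sy * Sq) := by
          field_simp
  have hNqSq : Nq = Sq ^ 2 := by rw [hSqd, Real.sq_sqrt hNq0]
  have hNySq : Ny = Sy ^ 2 := by rw [hSy, Real.sq_sqrt hNy0]
  rw [hgoalLHS]
  by_cases hSqz : Sq = 0
  · rw [hNqSq, hSqz]
    have h5 : (0:ℝ) ≤ (K ^ 2 / (J:ℝ) ^ 2) ^ 2 * Ny := by positivity
    simpa using h5
  · have hSqpos : 0 < Sq := lt_of_le_of_ne hSq0 (Ne.symm hSqz)
    have h6 : Sq * Sq ≤ (K ^ 2 / (J:ℝ) ^ 2 * Sy) * Sq := by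
      calc Sq * Sq = Nq := by rw [hNqSq]; ring
        _ ≤ K ^ 2 / (J:ℝ) ^ 2 * (Sy * Sq) := hsum
        _ = (K ^ 2 / (J:ℝ) ^ 2 * Sy) * Sq := by ring
    have h5 : Sq ≤ K ^ 2 / (J:ℝ) ^ 2 * Sy := le_of_mul_le_mul_right h6 hSqpos
    calc Nq = Sq ^ 2 := hNqSq
      _ ≤ (K ^ 2 / (J:ℝ) ^ 2 * Sy) ^ 2 := pow_le_pow_left₀ hSq0 h5 2
      _ = (K ^ 2 / (J:ℝ) ^ 2) ^ 2 * Ny := by rw [hNySq]; ring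
end

section
/- Let φ* : H → ℝ be a C² strictly convex function on a Hilbert space H (or finite-dimensional inner product space), and let Y ⊆ Z ⊆ H be nested closed subspaces. For y ∈ Y define H_Z(y + z) := sup_{ẑ ∈ Z} (⟨y + z, ẑ⟩ − φ*(ẑ)) for z ∈ Y^⊥ ∩ Z, and H_Y(y) := sup_{ŷ ∈ Y} (⟨y, ŷ⟩ − φ*(ŷ)). Assume φ* has Hessian bounded between λ·id and Λ·id with 0 < λ ≤ Λ. Then H_Y(y) = inf_{z ∈ Y^⊥ ∩ Z} H_Z(y + z), and the infimum is attained at the unique z* with P_Y ∇H_Z(y+z*) = ∇H_Z(y+z*). -/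
open RealInnerProductSpace


section AuxPartialLegendre

variable {n : ℕ} {lam : ℝ} {f : EuclideanSpace ℝ (Fin n) → ℝ}

lemma aux_line_deriv (f : EuclideanSpace ℝ (Fin n) → ℝ) (hf : ContDiff ℝ 2 f)
    (a d : EuclideanSpace ℝ (Fin n)) (t : ℝ) :
    HasDerivAt (fun s : ℝ => f (a + s • d)) (fderiv ℝ f (a + t • d) d) t := by
  have hline : HasDerivAt (fun s : ℝ => a + s • d) d t := by
    simpa using (hasDerivAt_id t).smul_const d |>.const_add a
  have hfd : HasFDerivAt f (fderiv ℝ f (a + t • d)) (a + t • d) :=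
    ((hf.differentiable (by norm_num)) (a + t • d)).hasFDerivAt
  exact hfd.comp_hasDerivAt t hline

lemma aux_line_deriv2 (f : EuclideanSpace ℝ (Fin n) → ℝ) (hf : ContDiff ℝ 2 f)
    (a d : EuclideanSpace ℝ (Fin n)) (t : ℝ) :
    HasDerivAt (fun s : ℝ => fderiv ℝ f (a + s • d) d)
      (iteratedFDeriv ℝ 2 f (a + t • d) ![d, d]) t := by
  have hline : HasDerivAt (fun s : ℝ => a + s • d) d t := by
    simpa using (hasDerivAt_id t).smul_const d |>.const_add a
  have hd1 : ContDiff ℝ 1 (fderiv ℝ f) := hf.fderiv_right (by norm_num)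
  have hfd : HasFDerivAt (fderiv ℝ f) (fderiv ℝ (fderiv ℝ f) (a + t • d)) (a + t • d) :=
    ((hd1.differentiable (by norm_num)) (a + t • d)).hasFDerivAt
  have h2 : HasDerivAt (fun s : ℝ => fderiv ℝ f (a + s • d))
      (fderiv ℝ (fderiv ℝ f) (a + t • d) d) t := hfd.comp_hasDerivAt t hline
  have := h2.clm_apply (hasDerivAt_const t d)
  simp only [map_zero, add_zero] at this
  rw [iteratedFDeriv_two_apply]
  simpa using this

lemma aux_fderiv_inner (f : EuclideanSpace ℝ (Fin n) → ℝ) (hf : ContDiff ℝ 2 f)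
    (x v : EuclideanSpace ℝ (Fin n)) : fderiv ℝ f x v = ⟪gradient f x, v⟫ := by
  have h := ((hf.differentiable (by norm_num)) x).hasGradientAt
  rw [hasGradientAt_iff_hasFDerivAt] at h
  rw [h.fderiv]
  simp [InnerProductSpace.toDual]

lemma aux_strong (lam : ℝ) (f : EuclideanSpace ℝ (Fin n) → ℝ)
    (hf : ContDiff ℝ 2 f)
    (hH : ∀ x v, lam * ‖v‖ ^ 2 ≤ iteratedFDeriv ℝ 2 f x ![v, v])
    (a b : EuclideanSpace ℝ (Fin n)) :
    f a + ⟪gradient f a, b - a⟫ + lam / 2 * ‖b - a‖ ^ 2 ≤ f b := by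
  set d := b - a with hd
  set q : ℝ → ℝ := fun s => fderiv ℝ f (a + s • d) d - lam * s * ‖d‖ ^ 2 with hq
  have hqderiv : ∀ s, HasDerivAt q
      (iteratedFDeriv ℝ 2 f (a + s • d) ![d, d] - lam * ‖d‖ ^ 2) s := by
    intro s
    have := (aux_line_deriv2 f hf a d s).sub
      (((hasDerivAt_id s).const_mul lam).mul_const (‖d‖ ^ 2))
    simp only [mul_one, id] at this
    exact this
  have hqmono : Monotone q := by
    apply monotone_of_deriv_nonneg
    · exact fun s => (hqderiv s).differentiableAt
    · intro s
      rw [(hqderiv s).deriv]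
      have := hH (a + s • d) d
      linarith
  set p : ℝ → ℝ := fun s =>
    f (a + s • d) - s * fderiv ℝ f a d - lam / 2 * s ^ 2 * ‖d‖ ^ 2 with hp
  have hpderiv : ∀ s, HasDerivAt p (q s - fderiv ℝ f a d) s := by
    intro s
    have h1 := (aux_line_deriv f hf a d s).sub
      ((hasDerivAt_id s).mul_const (fderiv ℝ f a d))
    have h2 : HasDerivAt (fun u : ℝ => lam / 2 * u ^ 2 * ‖d‖ ^ 2) (lam * s * ‖d‖ ^ 2) s := by
      have := ((hasDerivAt_pow 2 s).const_mul (lam / 2)).mul_const (‖d‖ ^ 2)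
      refine this.congr_deriv ?_
      ring
    have := h1.sub h2
    refine this.congr_deriv ?_
    simp only [hq]
    ring
  have hpmono : MonotoneOn p (Set.Icc (0:ℝ) 1) := by
    apply monotoneOn_of_deriv_nonneg (convex_Icc 0 1)
    · exact fun s _ => (hpderiv s).continuousAt.continuousWithinAt
    · intro s hs
      exact (hpderiv s).differentiableAt.differentiableWithinAt
    · intro s hs
      rw [interior_Icc] at hs
      rw [(hpderiv s).deriv]
      have h0 : q 0 ≤ q s := hqmono (le_of_lt hs.1)
      have : q 0 = fderiv ℝ f a d := by simp [hq]
      linarith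
  have hkey : p 0 ≤ p 1 := hpmono (by norm_num) (by norm_num) (by norm_num)
  have h0 : p 0 = f a := by simp [hp]
  have h1 : p 1 = f b - fderiv ℝ f a d - lam / 2 * ‖d‖ ^ 2 := by
    simp [hp, hd]
  rw [h0, h1] at hkey
  rw [← aux_fderiv_inner f hf a d]
  linarith

lemma aux_gap (hf : ContDiff ℝ 2 f)
    (hH : ∀ x v, lam * ‖v‖ ^ 2 ≤ iteratedFDeriv ℝ 2 f x ![v, v])
    (W : Submodule ℝ (EuclideanSpace ℝ (Fin n))) {x m : EuclideanSpace ℝ (Fin n)}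
    (hm : m ∈ W) (hstat : ∀ w ∈ W, ⟪x - gradient f m, w⟫ = 0)
    {w : EuclideanSpace ℝ (Fin n)} (hw : w ∈ W) :
    ⟪x, w⟫ - f w + lam / 2 * ‖w - m‖ ^ 2 ≤ ⟪x, m⟫ - f m := by
  have hs := aux_strong lam f hf hH m w
  have h0 := hstat _ (W.sub_mem hw hm)
  simp only [inner_sub_left, inner_sub_right] at h0 hs
  linarith

lemma aux_stat_exists (hlam : 0 < lam) (hf : ContDiff ℝ 2 f)
    (hH : ∀ x v, lam * ‖v‖ ^ 2 ≤ iteratedFDeriv ℝ 2 f x ![v, v])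
    (W : Submodule ℝ (EuclideanSpace ℝ (Fin n))) (x : EuclideanSpace ℝ (Fin n)) :
    ∃ m ∈ W, ∀ w ∈ W, ⟪x - gradient f m, w⟫ = 0 := by
  classical
  set g : EuclideanSpace ℝ (Fin n) → ℝ := fun w => ⟪x, w⟫ - f w with hg
  have hgcont : Continuous g := (continuous_const.inner continuous_id).sub hf.continuous
  set c := ‖x - gradient f 0‖ with hc
  have hc0 : 0 ≤ c := norm_nonneg _
  set R : ℝ := 2 * c / lam + 1 with hR
  have hR0 : 0 ≤ R := by positivity
  have hcoer : ∀ w : EuclideanSpace ℝ (Fin n), R ≤ ‖w‖ → g w < g 0 := by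
    intro w hw
    have hs := aux_strong lam f hf hH 0 w
    simp only [sub_zero] at hs
    have hCS : ⟪x - gradient f 0, w⟫ ≤ c * ‖w‖ := real_inner_le_norm _ _
    rw [inner_sub_left] at hCS
    have hg0 : g 0 = -f 0 := by simp [hg]
    have hgw : g w = ⟪x, w⟫ - f w := rfl
    have hlR : lam * R = 2 * c + lam := by
      rw [hR]
      field_simp
    have hwn : lam * ‖w‖ ≥ 2 * c + lam := by
      calc lam * ‖w‖ ≥ lam * R := by nlinarith
      _ = 2 * c + lam := hlR
    have h1 : 1 ≤ ‖w‖ := by nlinarith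
    rw [hg0, hgw]
    nlinarith [norm_nonneg w]
  have hWclosed : IsClosed (W : Set (EuclideanSpace ℝ (Fin n))) :=
    Submodule.closed_of_finiteDimensional W
  have hK : IsCompact ((W : Set (EuclideanSpace ℝ (Fin n))) ∩ Metric.closedBall 0 R) :=
    (isCompact_closedBall 0 R).inter_left hWclosed
  have h0K : (0 : EuclideanSpace ℝ (Fin n)) ∈
      (W : Set (EuclideanSpace ℝ (Fin n))) ∩ Metric.closedBall 0 R :=
    ⟨W.zero_mem, by simpa [Metric.mem_closedBall] using hR0⟩
  obtain ⟨m, hmK, hmax⟩ := hK.exists_isMaxOn ⟨0, h0K⟩ hgcont.continuousOn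
  have hmW : m ∈ W := hmK.1
  have hglobal : ∀ w ∈ W, g w ≤ g m := by
    intro w hw
    by_cases h : ‖w‖ ≤ R
    · exact hmax ⟨hw, by simpa [Metric.mem_closedBall] using h⟩
    · have h1 := hcoer w (le_of_lt (lt_of_not_ge h))
      have h2 : g 0 ≤ g m := hmax h0K
      linarith
  refine ⟨m, hmW, ?_⟩
  intro w hw
  have hline : ∀ t : ℝ, g (m + t • w) ≤ g m :=
    fun t => hglobal _ (W.add_mem hmW (W.smul_mem t hw))
  have hfun : (fun t : ℝ => g (m + t • w)) =
      fun t : ℝ => ⟪x, m⟫ + t * ⟪x, w⟫ - f (m + t • w) := by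
    funext t
    simp only [hg]
    rw [inner_add_right, real_inner_smul_right]
  have hderiv : HasDerivAt (fun t : ℝ => g (m + t • w)) (⟪x, w⟫ - fderiv ℝ f m w) 0 := by
    rw [hfun]
    have h1 : HasDerivAt (fun t : ℝ => ⟪x, m⟫ + t * ⟪x, w⟫) ⟪x, w⟫ (0:ℝ) := by
      simpa using ((hasDerivAt_id (0:ℝ)).mul_const ⟪x, w⟫).const_add ⟪x, m⟫
    have h2 := aux_line_deriv f hf m w 0
    simp only [zero_smul, add_zero] at h2
    exact h1.sub h2
  have hmax0 : IsLocalMax (fun t : ℝ => g (m + t • w)) 0 := by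
    apply Filter.Eventually.of_forall
    intro t
    simpa using hline t
  have hz := hmax0.deriv_eq_zero
  rw [hderiv.deriv] at hz
  rw [aux_fderiv_inner f hf] at hz
  rw [inner_sub_left]
  linarith

lemma aux_stat_unique (hlam : 0 < lam) (hf : ContDiff ℝ 2 f)
    (hH : ∀ x v, lam * ‖v‖ ^ 2 ≤ iteratedFDeriv ℝ 2 f x ![v, v])
    (W : Submodule ℝ (EuclideanSpace ℝ (Fin n))) {x m₁ m₂ : EuclideanSpace ℝ (Fin n)}
    (h1 : m₁ ∈ W) (hs1 : ∀ w ∈ W, ⟪x - gradient f m₁, w⟫ = 0)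
    (h2 : m₂ ∈ W) (hs2 : ∀ w ∈ W, ⟪x - gradient f m₂, w⟫ = 0) : m₁ = m₂ := by
  have g1 := aux_gap hf hH W h1 hs1 h2
  have g2 := aux_gap hf hH W h2 hs2 h1
  have hrev : ‖m₁ - m₂‖ = ‖m₂ - m₁‖ := norm_sub_rev _ _
  have : ‖m₂ - m₁‖ ^ 2 ≤ 0 := by nlinarith
  have h0 : ‖m₂ - m₁‖ = 0 := by nlinarith [norm_nonneg (m₂ - m₁)]
  have := norm_eq_zero.mp h0
  rw [sub_eq_zero] at this
  exact this.symm

lemma aux_sSup (hlam : 0 < lam) (hf : ContDiff ℝ 2 f)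
    (hH : ∀ x v, lam * ‖v‖ ^ 2 ≤ iteratedFDeriv ℝ 2 f x ![v, v])
    (W : Submodule ℝ (EuclideanSpace ℝ (Fin n))) {x m : EuclideanSpace ℝ (Fin n)}
    (hm : m ∈ W) (hstat : ∀ w ∈ W, ⟪x - gradient f m, w⟫ = 0) :
    sSup {r : ℝ | ∃ w ∈ W, r = ⟪x, w⟫ - f w} = ⟪x, m⟫ - f m := by
  have hub : ∀ r ∈ {r : ℝ | ∃ w ∈ W, r = ⟪x, w⟫ - f w}, r ≤ ⟪x, m⟫ - f m := by
    rintro r ⟨w, hw, rfl⟩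
    have := aux_gap hf hH W hm hstat hw
    nlinarith [sq_nonneg ‖w - m‖]
  apply le_antisymm
  · exact csSup_le ⟨_, ⟨m, hm, rfl⟩⟩ hub
  · exact le_csSup ⟨_, hub⟩ ⟨m, hm, rfl⟩

lemma aux_grad (hlam : 0 < lam) (hf : ContDiff ℝ 2 f)
    (hH : ∀ x v, lam * ‖v‖ ^ 2 ≤ iteratedFDeriv ℝ 2 f x ![v, v])
    (W : Submodule ℝ (EuclideanSpace ℝ (Fin n))) (HW : EuclideanSpace ℝ (Fin n) → ℝ)
    (hHW : ∀ x, HW x = sSup {r : ℝ | ∃ w ∈ W, r = ⟪x, w⟫ - f w})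
    {x₀ m₀ : EuclideanSpace ℝ (Fin n)} (hm₀ : m₀ ∈ W)
    (hstat₀ : ∀ w ∈ W, ⟪x₀ - gradient f m₀, w⟫ = 0) :
    HasGradientAt HW m₀ x₀ := by
  classical
  choose m hmW hmstat using fun x => aux_stat_exists hlam hf hH W x
  have hval : ∀ x, HW x = ⟪x, m x⟫ - f (m x) := fun x => by
    rw [hHW x]; exact aux_sSup hlam hf hH W (hmW x) (hmstat x)
  have hval₀ : HW x₀ = ⟪x₀, m₀⟫ - f m₀ := by
    rw [hHW x₀]; exact aux_sSup hlam hf hH W hm₀ hstat₀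
  have hlip : ∀ x, lam * ‖m x - m₀‖ ^ 2 ≤ ‖x - x₀‖ * ‖m x - m₀‖ := by
    intro x
    have g1 := aux_gap hf hH W (hmW x) (hmstat x) hm₀
    have g2 := aux_gap hf hH W hm₀ hstat₀ (hmW x)
    have hCS : ⟪x - x₀, m x - m₀⟫ ≤ ‖x - x₀‖ * ‖m x - m₀‖ := real_inner_le_norm _ _
    rw [inner_sub_left, inner_sub_right, inner_sub_right] at hCS
    have hrev : ‖m₀ - m x‖ = ‖m x - m₀‖ := norm_sub_rev _ _
    rw [hrev] at g1
    nlinarith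
  have hbound : ∀ x, |HW x - HW x₀ - ⟪m₀, x - x₀⟫| ≤ ‖x - x₀‖ ^ 2 / lam := by
    intro x
    have hcomm : ⟪m₀, x - x₀⟫ = ⟪x, m₀⟫ - ⟪x₀, m₀⟫ := by
      rw [real_inner_comm, inner_sub_left]
    have hlow : 0 ≤ HW x - HW x₀ - ⟪m₀, x - x₀⟫ := by
      have g1 := aux_gap hf hH W (hmW x) (hmstat x) hm₀
      rw [← hval x] at g1
      rw [hcomm, hval₀]
      nlinarith [sq_nonneg ‖m₀ - m x‖]
    have hupp : HW x - HW x₀ - ⟪m₀, x - x₀⟫ ≤ ‖x - x₀‖ ^ 2 / lam := by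
      have g2 := aux_gap hf hH W hm₀ hstat₀ (hmW x)
      rw [← hval₀] at g2
      have hCS : ⟪x - x₀, m x - m₀⟫ ≤ ‖x - x₀‖ * ‖m x - m₀‖ := real_inner_le_norm _ _
      rw [inner_sub_left, inner_sub_right, inner_sub_right] at hCS
      have hl := hlip x
      have step : HW x - HW x₀ - ⟪m₀, x - x₀⟫ ≤ ‖x - x₀‖ * ‖m x - m₀‖ := by
        rw [hval x, hcomm]
        nlinarith [sq_nonneg ‖m x - m₀‖]
      have final : ‖x - x₀‖ * ‖m x - m₀‖ ≤ ‖x - x₀‖ ^ 2 / lam := by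
        rw [le_div_iff₀ hlam]
        nlinarith [sq_nonneg (lam * ‖m x - m₀‖ - ‖x - x₀‖),
          mul_le_mul_of_nonneg_left hl (le_of_lt hlam)]
      linarith
    rw [abs_le]
    constructor
    · have : (0:ℝ) ≤ ‖x - x₀‖ ^ 2 / lam := by positivity
      linarith
    · exact hupp
  rw [hasGradientAt_iff_isLittleO, Asymptotics.isLittleO_iff]
  intro c hc
  rw [Metric.eventually_nhds_iff]
  refine ⟨c * lam, by positivity, ?_⟩
  intro x hx
  rw [dist_eq_norm] at hx
  have hb := hbound x
  have hn : ‖x - x₀‖ ^ 2 / lam ≤ c * ‖x - x₀‖ := by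
    rw [div_le_iff₀ hlam]
    nlinarith [norm_nonneg (x - x₀)]
  calc ‖HW x - HW x₀ - ⟪m₀, x - x₀⟫‖ = |HW x - HW x₀ - ⟪m₀, x - x₀⟫| := rfl
  _ ≤ ‖x - x₀‖ ^ 2 / lam := hb
  _ ≤ c * ‖x - x₀‖ := hn

end AuxPartialLegendre

/-- Partial Legendre transform identity: for a uniformly convex `C²` function `φ*`
and nested subspaces `Y ⊆ Z`, the Legendre transform `H_Y` over `Y` equals the
infimum over `z ∈ Y^⊥ ∩ Z` of the Legendre transform `H_Z` over `Z` evaluated at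
`y + z`, and the infimum is attained at the unique `z*` where `∇H_Z(y+z*)` is fixed
by the orthogonal projection onto `Y`. -/
theorem stmt_13 (n : ℕ) (lam Lam : ℝ) (hlam : 0 < lam) (hlL : lam ≤ Lam)
    (Y Z : Submodule ℝ (EuclideanSpace ℝ (Fin n))) (hYZ : Y ≤ Z)
    (φs : EuclideanSpace ℝ (Fin n) → ℝ) (hφs : ContDiff ℝ 2 φs)
    (hHess : ∀ x v, lam * ‖v‖ ^ 2 ≤ iteratedFDeriv ℝ 2 φs x ![v, v] ∧
      iteratedFDeriv ℝ 2 φs x ![v, v] ≤ Lam * ‖v‖ ^ 2)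
    (HZ HY : EuclideanSpace ℝ (Fin n) → ℝ)
    (hHZ : ∀ x, HZ x = sSup {r : ℝ | ∃ zh ∈ Z, r = ⟪x, zh⟫ - φs zh})
    (hHY : ∀ x, HY x = sSup {r : ℝ | ∃ yh ∈ Y, r = ⟪x, yh⟫ - φs yh})
    (y : EuclideanSpace ℝ (Fin n)) (hy : y ∈ Y) :
    HY y = sInf {r : ℝ | ∃ z ∈ (Yᗮ ⊓ Z : Submodule ℝ (EuclideanSpace ℝ (Fin n))),
        r = HZ (y + z)} ∧
    ∃! zstar : EuclideanSpace ℝ (Fin n),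
      zstar ∈ (Yᗮ ⊓ Z : Submodule ℝ (EuclideanSpace ℝ (Fin n))) ∧
      HZ (y + zstar) = HY y ∧
      ((Submodule.orthogonalProjectionOnto Y (gradient HZ (y + zstar)) :
          EuclideanSpace ℝ (Fin n)) = gradient HZ (y + zstar)) := by
  classical
  have hH1 : ∀ x v, lam * ‖v‖ ^ 2 ≤ iteratedFDeriv ℝ 2 φs x ![v, v] :=
    fun x v => (hHess x v).1
  set V : Submodule ℝ (EuclideanSpace ℝ (Fin n)) := Yᗮ ⊓ Z with hV
  -- stationary point for Y at y
  obtain ⟨yh, hyhY, hyhstat⟩ := aux_stat_exists hlam hφs hH1 Y y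
  have hHYy : HY y = ⟪y, yh⟫ - φs yh := by
    rw [hHY]; exact aux_sSup hlam hφs hH1 Y hyhY hyhstat
  -- define zstar
  set g₀ : EuclideanSpace ℝ (Fin n) := gradient φs yh with hg₀
  set zs : EuclideanSpace ℝ (Fin n) := (Submodule.orthogonalProjectionOnto V g₀ : EuclideanSpace ℝ (Fin n))
    with hzs
  have hzsV : zs ∈ V := SetLike.coe_mem _
  have hzsYperp : zs ∈ Yᗮ := hzsV.1
  -- yh is stationary for Z at y + zs
  have hstatZ : ∀ w ∈ Z, ⟪(y + zs) - g₀, w⟫ = 0 := by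
    intro w hw
    have hw1Y : (Submodule.orthogonalProjectionOnto Y w : EuclideanSpace ℝ (Fin n)) ∈ Y := SetLike.coe_mem _
    set w₁ : EuclideanSpace ℝ (Fin n) := (Submodule.orthogonalProjectionOnto Y w : EuclideanSpace ℝ (Fin n))
    set w₂ : EuclideanSpace ℝ (Fin n) := w - w₁ with hw₂def
    have hw₂perp : w₂ ∈ Yᗮ := Submodule.sub_starProjection_mem_orthogonal w
    have hw₂Z : w₂ ∈ Z := Z.sub_mem hw (hYZ hw1Y)
    have hw₂V : w₂ ∈ V := ⟨hw₂perp, hw₂Z⟩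
    have hsplit : w = w₁ + w₂ := by simp [hw₂def]
    have hA : ⟪(y + zs) - g₀, w₁⟫ = 0 := by
      have h1 : ⟪y - g₀, w₁⟫ = 0 := hyhstat w₁ hw1Y
      have h2 : ⟪zs, w₁⟫ = 0 := by
        rw [real_inner_comm]
        exact (Submodule.mem_orthogonal Y zs).mp hzsYperp w₁ hw1Y
      simp only [inner_sub_left, inner_add_left] at h1 ⊢
      linarith
    have hB : ⟪(y + zs) - g₀, w₂⟫ = 0 := by
      have h1 : ⟪y, w₂⟫ = 0 := (Submodule.mem_orthogonal Y w₂).mp hw₂perp y hy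
      have h2 : ⟪g₀ - zs, w₂⟫ = 0 := by
        have hmem := Submodule.sub_starProjection_mem_orthogonal (K := V) g₀
        rw [real_inner_comm]
        exact (Submodule.mem_orthogonal V _).mp hmem w₂ hw₂V
      simp only [inner_sub_left, inner_add_left] at h2 ⊢
      linarith
    rw [hsplit, inner_add_right]
    rw [hA, hB]; ring
  have hHZval : HZ (y + zs) = ⟪y + zs, yh⟫ - φs yh := by
    rw [hHZ]; exact aux_sSup hlam hφs hH1 Z (hYZ hyhY) hstatZ
  have hzsyh : ⟪zs, yh⟫ = 0 := by
    rw [real_inner_comm]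
    exact (Submodule.mem_orthogonal Y zs).mp hzsYperp yh hyhY
  have hHZHY : HZ (y + zs) = HY y := by
    rw [hHZval, hHYy, inner_add_left, hzsyh]; ring
  have hgradzs : gradient HZ (y + zs) = yh :=
    (aux_grad hlam hφs hH1 Z HZ hHZ (hYZ hyhY) hstatZ).gradient
  -- lower bound
  have hlb : ∀ z ∈ V, HY y ≤ HZ (y + z) := by
    intro z hz
    obtain ⟨mz, hmzZ, hmzstat⟩ := aux_stat_exists hlam hφs hH1 Z (y + z)
    have hval : HZ (y + z) = ⟪y + z, mz⟫ - φs mz := by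
      rw [hHZ]; exact aux_sSup hlam hφs hH1 Z hmzZ hmzstat
    have hzyh : ⟪z, yh⟫ = 0 := by
      rw [real_inner_comm]
      exact (Submodule.mem_orthogonal Y z).mp hz.1 yh hyhY
    have hgap := aux_gap hφs hH1 Z hmzZ hmzstat (hYZ hyhY)
    rw [hHYy, hval]
    rw [inner_add_left, hzyh] at hgap
    nlinarith [sq_nonneg ‖yh - mz‖]
  -- sInf part
  have hmemS : HY y ∈ {r : ℝ | ∃ z ∈ V, r = HZ (y + z)} := ⟨zs, hzsV, hHZHY.symm⟩
  have hlbS : ∀ r ∈ {r : ℝ | ∃ z ∈ V, r = HZ (y + z)}, HY y ≤ r := by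
    rintro r ⟨z, hz, rfl⟩; exact hlb z hz
  constructor
  · exact le_antisymm (le_csInf ⟨_, hmemS⟩ hlbS) (csInf_le ⟨HY y, hlbS⟩ hmemS)
  · refine ⟨zs, ⟨hzsV, hHZHY, ?_⟩, ?_⟩
    · rw [hgradzs]
      exact Submodule.starProjection_eq_self_iff.mpr hyhY
    · rintro z ⟨hzV, hzval, hzproj⟩
      obtain ⟨mz, hmzZ, hmzstat⟩ := aux_stat_exists hlam hφs hH1 Z (y + z)
      have hgradz : gradient HZ (y + z) = mz :=
        (aux_grad hlam hφs hH1 Z HZ hHZ hmzZ hmzstat).gradient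
      rw [hgradz] at hzproj
      have hmzY : mz ∈ Y := Submodule.starProjection_eq_self_iff.mp hzproj
      have hmzstatY : ∀ w ∈ Y, ⟪y - gradient φs mz, w⟫ = 0 := by
        intro w hw
        have h1 := hmzstat w (hYZ hw)
        have h2 : ⟪z, w⟫ = 0 := by
          rw [real_inner_comm]
          exact (Submodule.mem_orthogonal Y z).mp hzV.1 w hw
        simp only [inner_sub_left, inner_add_left] at h1 ⊢
        linarith
      have hmzyh : mz = yh := aux_stat_unique hlam hφs hH1 Y hmzY hmzstatY hyhY hyhstat
      rw [hmzyh] at hmzstat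
      have hdiff : ∀ w ∈ V, ⟪z - zs, w⟫ = 0 := by
        intro w hw
        have h1 := hmzstat w hw.2
        have h2 := hstatZ w hw.2
        simp only [inner_sub_left, inner_add_left, hg₀] at h1 h2 ⊢
        linarith
      have hself := hdiff (z - zs) (V.sub_mem hzV hzsV)
      have : z - zs = 0 := by
        rwa [inner_self_eq_zero] at hself
      rw [sub_eq_zero] at this
      exact this
end

section
/- Let φ*, φ̃* : ℝⁿ → ℝ be C² with λ·id ≤ Hess φ*, Hess φ̃* ≤ Λ·id, and let Y ⊆ ℝⁿ be a subspace with orthogonal projection P. Fix y ∈ Y and let ŷ, ỹ ∈ Y solve P∇φ*(ŷ) = y and P∇φ̃*(ỹ) = y. Then λ|ŷ − ỹ|² ≤ |∇φ*(ỹ) − ∇φ̃*(ỹ)| · |ŷ − ỹ|; in particular |ŷ − ỹ| ≤ (1/λ) sup_Y |∇φ* − ∇φ̃*|. -/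
open RealInnerProductSpace

private lemma strong_mono {n : ℕ} {lam : ℝ}
    (φ : EuclideanSpace ℝ (Fin n) → ℝ) (hφ : ContDiff ℝ 2 φ)
    (hH : ∀ x v, lam * ‖v‖ ^ 2 ≤ iteratedFDeriv ℝ 2 φ x ![v, v])
    (a b : EuclideanSpace ℝ (Fin n)) :
    lam * ‖a - b‖ ^ 2 ≤ ⟪gradient φ a - gradient φ b, a - b⟫ := by
  set v := a - b with hv
  have hd1 : Differentiable ℝ φ := hφ.differentiable two_ne_zero
  have hd2 : Differentiable ℝ (fderiv ℝ φ) :=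
    (hφ.fderiv_right (m := 1) le_rfl).differentiable one_ne_zero
  set g : ℝ → ℝ := fun t => fderiv ℝ φ (b + t • v) v with hg
  have hder : ∀ t : ℝ, HasDerivAt g
      (fderiv ℝ (fderiv ℝ φ) (b + t • v) v v) t := by
    intro t
    have hc : HasDerivAt (fun t : ℝ => b + t • v) v t := by
      simpa using ((hasDerivAt_id t).smul_const v).const_add b
    have h2 : HasFDerivAt (fderiv ℝ φ) (fderiv ℝ (fderiv ℝ φ) (b + t • v)) (b + t • v) :=
      (hd2 _).hasFDerivAt
    have h3 := h2.comp_hasDerivAt t hc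
    have h4 := (ContinuousLinearMap.apply ℝ ℝ v).hasFDerivAt.comp_hasDerivAt t h3
    exact h4
  have hlow : ∀ t : ℝ, lam * ‖v‖ ^ 2 ≤ fderiv ℝ (fderiv ℝ φ) (b + t • v) v v := by
    intro t
    have := (hH (b + t • v) v)
    rwa [iteratedFDeriv_two_apply] at this
  -- h t := g t - (lam * ‖v‖^2) * t is monotone
  have hmono : g 0 + lam * ‖v‖ ^ 2 ≤ g 1 := by
    have hmon : Monotone (fun t : ℝ => g t - lam * ‖v‖ ^ 2 * t) := by
      apply monotone_of_deriv_nonneg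
      · exact fun t => ((hder t).sub ((hasDerivAt_id t).const_mul _)).differentiableAt
      · intro t
        have := ((hder t).sub (((hasDerivAt_id t).const_mul (lam * ‖v‖ ^ 2)))).deriv
        simp only [id] at this
        rw [show (fun t : ℝ => g t - lam * ‖v‖ ^ 2 * t) = (g - fun y => lam * ‖v‖ ^ 2 * y) from rfl, this]
        simp only [mul_one]
        linarith [hlow t]
    have := hmon (by norm_num : (0:ℝ) ≤ 1)
    simp only [mul_zero, mul_one, sub_zero] at this
    linarith
  have hgrad : ∀ x : EuclideanSpace ℝ (Fin n), ⟪gradient φ x, v⟫ = fderiv ℝ φ x v := by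
    intro x
    simp [gradient, InnerProductSpace.toDual_symm_apply]
  have h0 : g 0 = ⟪gradient φ b, v⟫ := by simp [hg, hgrad]
  have h1 : g 1 = ⟪gradient φ a, v⟫ := by
    have : b + (1:ℝ) • v = a := by simp [hv]
    rw [hg]; simp only [this, hgrad]
  rw [inner_sub_left]
  rw [h0, h1] at hmono
  linarith

/-- Comparison of constrained Legendre duals for two uniformly convex potentials:
if `P∇φ*(ŷ) = y` and `P∇φ̃*(ỹ) = y` with `ŷ, ỹ ∈ Y`, then
`λ|ŷ − ỹ|² ≤ |∇φ*(ỹ) − ∇φ̃*(ỹ)|·|ŷ − ỹ|`, and in particular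
`|ŷ − ỹ| ≤ (1/λ) sup_Y |∇φ* − ∇φ̃*|`. -/
theorem stmt_14 (n : ℕ) (lam Lam : ℝ) (hlam : 0 < lam) (hlL : lam ≤ Lam)
    (φs φt : EuclideanSpace ℝ (Fin n) → ℝ)
    (hφs : ContDiff ℝ 2 φs) (hφt : ContDiff ℝ 2 φt)
    (hHs : ∀ x v, lam * ‖v‖ ^ 2 ≤ iteratedFDeriv ℝ 2 φs x ![v, v] ∧
      iteratedFDeriv ℝ 2 φs x ![v, v] ≤ Lam * ‖v‖ ^ 2)
    (hHt : ∀ x v, lam * ‖v‖ ^ 2 ≤ iteratedFDeriv ℝ 2 φt x ![v, v] ∧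
      iteratedFDeriv ℝ 2 φt x ![v, v] ≤ Lam * ‖v‖ ^ 2)
    (Y : Submodule ℝ (EuclideanSpace ℝ (Fin n)))
    (y : EuclideanSpace ℝ (Fin n)) (hy : y ∈ Y)
    (yh yt : EuclideanSpace ℝ (Fin n)) (hyh : yh ∈ Y) (hyt : yt ∈ Y)
    (hsolh : (Submodule.orthogonalProjection Y (gradient φs yh) : EuclideanSpace ℝ (Fin n)) = y)
    (hsolt : (Submodule.orthogonalProjection Y (gradient φt yt) : EuclideanSpace ℝ (Fin n)) = y) :
    lam * ‖yh - yt‖ ^ 2 ≤ ‖gradient φs yt - gradient φt yt‖ * ‖yh - yt‖ ∧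
    ∀ ε : ℝ, (∀ x ∈ Y, ‖gradient φs x - gradient φt x‖ ≤ ε) →
      ‖yh - yt‖ ≤ ε / lam := by
  have hdY : yh - yt ∈ Y := sub_mem hyh hyt
  -- the cross term vanishes
  have hperp : gradient φs yh - gradient φt yt ∈ Yᗮ := by
    rw [← Submodule.orthogonalProjectionOnto_eq_zero_iff]
    ext
    simp only [map_sub, Submodule.coe_sub, hsolh, hsolt]
    simp
  have hzero : ⟪yh - yt, gradient φs yh - gradient φt yt⟫ = 0 :=
    Submodule.inner_right_of_mem_orthogonal hdY hperp
  have hzero' : ⟪gradient φs yh - gradient φt yt, yh - yt⟫ = 0 := by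
    rw [real_inner_comm]; exact hzero
  have hsm := strong_mono φs hφs (fun x v => (hHs x v).1) yh yt
  have hsplit : ⟪gradient φs yh - gradient φs yt, yh - yt⟫
      = ⟪gradient φt yt - gradient φs yt, yh - yt⟫ := by
    rw [← sub_add_sub_cancel (gradient φs yh) (gradient φt yt) (gradient φs yt),
      inner_add_left, hzero', zero_add]
  have hcs : ⟪gradient φt yt - gradient φs yt, yh - yt⟫
      ≤ ‖gradient φs yt - gradient φt yt‖ * ‖yh - yt‖ := by
    calc ⟪gradient φt yt - gradient φs yt, yh - yt⟫
        ≤ ‖gradient φt yt - gradient φs yt‖ * ‖yh - yt‖ := real_inner_le_norm _ _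
      _ = ‖gradient φs yt - gradient φt yt‖ * ‖yh - yt‖ := by rw [norm_sub_rev]
  have hmain : lam * ‖yh - yt‖ ^ 2 ≤ ‖gradient φs yt - gradient φt yt‖ * ‖yh - yt‖ := by
    rw [hsplit] at hsm
    linarith
  refine ⟨hmain, fun ε hε => ?_⟩
  have hbound := hε yt hyt
  have h1 : lam * ‖yh - yt‖ ^ 2 ≤ ε * ‖yh - yt‖ := by
    calc lam * ‖yh - yt‖ ^ 2 ≤ ‖gradient φs yt - gradient φt yt‖ * ‖yh - yt‖ := hmain
      _ ≤ ε * ‖yh - yt‖ := by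
          apply mul_le_mul_of_nonneg_right hbound (norm_nonneg _)
  rcases eq_or_lt_of_le (norm_nonneg (yh - yt)) with h | h
  · rw [← h]
    have hε0 : 0 ≤ ε := le_trans (norm_nonneg _) hbound
    positivity
  · rw [le_div_iff₀ hlam]
    have := mul_le_mul_of_nonneg_right h1 (le_of_lt (inv_pos.mpr h))
    nlinarith
end
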